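/- There do not exist a measurable space Λ, a probability measure μ on Λ, and functions A, B : S² → Λ → ℝ (S² the unit sphere in ℝ³) with: (i) for every unit vector n, λ ↦ A n λ and λ ↦ B n λ are measurable with values in {-1, 1}, and (ii) for all unit vectors a, b in ℝ³, ∫ A a λ · B b λ dμ(λ) = −⟪a,b⟫, where ⟪·,·⟫ is the Euclidean inner product on ℝ³. -/

import Mathlib

open MeasureTheory
open scoped RealInnerProductSpace

/-- Corollary 1: there is no local, deterministic hidden variable model
`(Λ, A, B, μ)` of the EPR-Bohm experiment, with `±1`-valued observables,
reproducing the quantum mechanical product expectation values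
`∫ A(a,λ)B(b,λ) dμ = -⟪a,b⟫`. -/
private lemma pm_cases {x : ℝ} (hx : x ∈ ({-1, 1} : Set ℝ)) : x = -1 ∨ x = 1 := by
  simpa using hx

theorem no_hidden_variable_model :
    ¬ ∃ (Λ : Type) (_ : MeasurableSpace Λ) (μ : Measure Λ)
        (_ : IsProbabilityMeasure μ)
        (A B : EuclideanSpace ℝ (Fin 3) → Λ → ℝ),
      (∀ n : EuclideanSpace ℝ (Fin 3), ‖n‖ = 1 →
        Measurable (A n) ∧ Measurable (B n) ∧
        (∀ l : Λ, A n l ∈ ({-1, 1} : Set ℝ)) ∧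
        (∀ l : Λ, B n l ∈ ({-1, 1} : Set ℝ))) ∧
      (∀ a b : EuclideanSpace ℝ (Fin 3), ‖a‖ = 1 → ‖b‖ = 1 →
        (∫ l, A a l * B b l ∂μ) = -⟪a, b⟫) := by
  rintro ⟨Λ, mΛ, μ, hμ, A, B, hmeas, hcorr⟩
  -- generic integrability of products of ±1-valued measurable functions
  have hint : ∀ (f g : Λ → ℝ), Measurable f → Measurable g →
      (∀ l, f l ∈ ({-1, 1} : Set ℝ)) → (∀ l, g l ∈ ({-1, 1} : Set ℝ)) →
      Integrable (fun l => f l * g l) μ := by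
    intro f g hf hg hfv hgv
    refine ⟨(hf.mul hg).aestronglyMeasurable, ?_⟩
    apply HasFiniteIntegral.of_bounded (C := 1)
    filter_upwards with l
    have h1 : |f l| = 1 := by rcases pm_cases (hfv l) with h | h <;> simp [h]
    have h2 : |g l| = 1 := by rcases pm_cases (hgv l) with h | h <;> simp [h]
    simp [Real.norm_eq_abs, abs_mul, h1, h2]
  -- anti-correlation: B n = - A n a.e.
  have hanti : ∀ n : EuclideanSpace ℝ (Fin 3), ‖n‖ = 1 →
      ∀ᵐ l ∂μ, B n l = - A n l := by
    intro n hn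
    obtain ⟨hAm, hBm, hAv, hBv⟩ := hmeas n hn
    have hnn : ⟪n, n⟫ = 1 := by
      rw [real_inner_self_eq_norm_mul_norm, hn]; ring
    have h1 : ∫ l, A n l * B n l ∂μ = -1 := by rw [hcorr n n hn hn, hnn]
    have hintAB := hint (A n) (B n) hAm hBm hAv hBv
    have hintg : Integrable (fun l => 1 + A n l * B n l) μ :=
      (integrable_const 1).add hintAB
    have hnonneg : (0 : Λ → ℝ) ≤ fun l => 1 + A n l * B n l := by
      intro l
      rcases pm_cases (hAv l) with h | h <;> rcases pm_cases (hBv l) with h' | h' <;>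
        simp [h, h']
    have hzero : ∫ l, (1 + A n l * B n l) ∂μ = 0 := by
      rw [integral_add (integrable_const 1) hintAB, h1]
      simp
    have := (integral_eq_zero_iff_of_nonneg hnonneg hintg).mp hzero
    filter_upwards [this] with l hl
    have hl' : 1 + A n l * B n l = 0 := hl
    rcases pm_cases (hAv l) with h | h <;> rcases pm_cases (hBv l) with h' | h' <;>
      norm_num [h, h'] at hl' <;> norm_num [h, h']
  -- the A-A correlation equals the inner product
  have hAA : ∀ a b : EuclideanSpace ℝ (Fin 3), ‖a‖ = 1 → ‖b‖ = 1 →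
      ∫ l, A a l * A b l ∂μ = ⟪a, b⟫ := by
    intro a b ha hb
    have hB := hanti b hb
    have hcongr : ∫ l, A a l * B b l ∂μ = ∫ l, -(A a l * A b l) ∂μ := by
      refine integral_congr_ae ?_
      filter_upwards [hB] with l hl
      rw [hl]; ring
    have := hcorr a b ha hb
    rw [hcongr, integral_neg] at this
    linarith
  -- Bell's inequality for the inner products
  have hBell : ∀ a b c : EuclideanSpace ℝ (Fin 3), ‖a‖ = 1 → ‖b‖ = 1 → ‖c‖ = 1 →
      |⟪a, b⟫ - ⟪a, c⟫| ≤ 1 - ⟪b, c⟫ := by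
    intro a b c ha hb hc
    obtain ⟨hAa, _, hVa, _⟩ := hmeas a ha
    obtain ⟨hAb, _, hVb, _⟩ := hmeas b hb
    obtain ⟨hAc, _, hVc, _⟩ := hmeas c hc
    have hab := hint (A a) (A b) hAa hAb hVa hVb
    have hac := hint (A a) (A c) hAa hAc hVa hVc
    have hbc := hint (A b) (A c) hAb hAc hVb hVc
    rw [← hAA a b ha hb, ← hAA a c ha hc, ← hAA b c hb hc]
    rw [← integral_sub hab hac]
    calc |∫ l, (A a l * A b l - A a l * A c l) ∂μ|
        ≤ ∫ l, |A a l * A b l - A a l * A c l| ∂μ := by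
          simpa [Real.norm_eq_abs] using
            norm_integral_le_integral_norm (fun l => A a l * A b l - A a l * A c l) (μ := μ)
      _ ≤ ∫ l, (1 - A b l * A c l) ∂μ := by
          refine integral_mono (hab.sub hac).abs ((integrable_const 1).sub hbc) ?_
          intro l
          rcases pm_cases (hVa l) with h | h <;> rcases pm_cases (hVb l) with h' | h' <;>
            rcases pm_cases (hVc l) with h'' | h'' <;> simp only [h, h'', h'] <;> norm_num
      _ = 1 - ∫ l, A b l * A c l ∂μ := by
          rw [integral_sub (integrable_const 1) hbc]
          simp
  -- concrete vectors violating Bell's inequality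
  set u : EuclideanSpace ℝ (Fin 3) := EuclideanSpace.single 0 (1 : ℝ) with hu
  set w : EuclideanSpace ℝ (Fin 3) := EuclideanSpace.single 1 (1 : ℝ) with hw
  set v : EuclideanSpace ℝ (Fin 3) := (Real.sqrt 2)⁻¹ • (u + w) with hv
  have hs2 : (0 : ℝ) < Real.sqrt 2 := Real.sqrt_pos.mpr (by norm_num)
  have hs2sq : Real.sqrt 2 * Real.sqrt 2 = 2 := Real.mul_self_sqrt (by norm_num)
  have hu1 : ‖u‖ = 1 := by simp [hu]
  have hw1 : ‖w‖ = 1 := by simp [hw]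
  have huw : ⟪u, w⟫ = 0 := by
    rw [hu, hw, EuclideanSpace.inner_single_left]
    simp [EuclideanSpace.single_apply]
  have huu : ⟪u, u⟫ = 1 := by
    rw [real_inner_self_eq_norm_mul_norm, hu1]; ring
  have hww : ⟪w, w⟫ = 1 := by
    rw [real_inner_self_eq_norm_mul_norm, hw1]; ring
  have hwu : ⟪w, u⟫ = 0 := by rw [real_inner_comm]; exact huw
  have huwnorm : ‖u + w‖ = Real.sqrt 2 := by
    have : ‖u + w‖ * ‖u + w‖ = 2 := by
      rw [← real_inner_self_eq_norm_mul_norm]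
      rw [inner_add_add_self, huu, hww, huw, hwu]
      ring
    nlinarith [norm_nonneg (u + w), Real.sqrt_nonneg 2]
  have hv1 : ‖v‖ = 1 := by
    rw [hv, norm_smul, huwnorm]
    rw [Real.norm_eq_abs, abs_of_pos (inv_pos.mpr hs2)]
    field_simp
  have huv : ⟪u, v⟫ = (Real.sqrt 2)⁻¹ := by
    rw [hv, real_inner_smul_right, inner_add_right, huu, huw]
    ring
  have hvw : ⟪v, w⟫ = (Real.sqrt 2)⁻¹ := by
    rw [hv, real_inner_smul_left, inner_add_left, huw, hww]
    ring
  have hB := hBell u v w hu1 hv1 hw1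
  rw [huv, huw, hvw] at hB
  rw [sub_zero, abs_of_pos (inv_pos.mpr hs2)] at hB
  -- (√2)⁻¹ ≤ 1 - (√2)⁻¹ gives 2 ≤ √2, contradiction
  have h2 : 2 * (Real.sqrt 2)⁻¹ ≤ 1 := by linarith
  have hinv : (Real.sqrt 2)⁻¹ * Real.sqrt 2 = 1 := inv_mul_cancel₀ (ne_of_gt hs2)
  nlinarith [hs2sq, hs2, hinv, mul_le_mul_of_nonneg_right h2 hs2.le]
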